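/- Telescoping/simulation lemma: For two MDPs M = (S, A, r, T, γ) and M̂ = (S, A, r, T̂, γ) sharing the same reward r and initial state distribution μ₀, and any policy π, J(π, M) − J(π, M̂) = (γ/(1−γ)) · E_{(s,a)∼ρ^π_{M̂}} [ E_{s'∼T(·|s,a)} V^π_M(s') − E_{s'∼T̂(·|s,a)} V^π_M(s') ], where ρ^π_{M̂} is the normalized discounted occupancy measure of π in M̂. -/

import Mathlib

open scoped BigOperators

/-- A Markov decision process on finite state space `S` and action space `A`,
with reward `r`, transition kernel `T` (as a function giving next-state probabilities),
and discount factor `γ`. -/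
structure MDP (S A : Type*) where
  r : S → A → ℝ
  T : S → A → S → ℝ
  γ : ℝ

variable {S A : Type*} [Fintype S] [Fintype A] [DecidableEq S]

/-- `π` is a stationary stochastic policy: `π s` is a probability distribution over actions. -/
def IsPolicy (π : S → A → ℝ) : Prop :=
  (∀ s a, 0 ≤ π s a) ∧ ∀ s, ∑ a, π s a = 1

/-- `T` is a transition kernel: `T s a` is a probability distribution over next states. -/
def IsKernel (T : S → A → S → ℝ) : Prop :=
  (∀ s a s', 0 ≤ T s a s') ∧ ∀ s a, ∑ s', T s a s' = 1

/-- `μ` is a probability distribution on states. -/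
def IsDist (μ : S → ℝ) : Prop :=
  (∀ s, 0 ≤ μ s) ∧ ∑ s, μ s = 1

/-- `stateDist M π μ₀ t s` is the probability `P^π_{M,t}(s)` that the state at time `t`
equals `s` when executing policy `π` in MDP `M` from initial distribution `μ₀`. -/
noncomputable def stateDist (M : MDP S A) (π : S → A → ℝ) (μ₀ : S → ℝ) : ℕ → S → ℝ
  | 0 => μ₀
  | t + 1 => fun s' => ∑ s, ∑ a, stateDist M π μ₀ t s * π s a * M.T s a s'

/-- Expected reward at time `t` under policy `π` in MDP `M` started from `μ₀`. -/
noncomputable def expRewardAt (M : MDP S A) (π : S → A → ℝ) (μ₀ : S → ℝ) (t : ℕ) : ℝ :=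
  ∑ s, ∑ a, stateDist M π μ₀ t s * π s a * M.r s a

/-- Value function `V^π_M(s) = E[∑_t γ^t r(s_t,a_t) | s₀ = s]`. -/
noncomputable def Vval (M : MDP S A) (π : S → A → ℝ) (s : S) : ℝ :=
  ∑' t : ℕ, M.γ ^ t * expRewardAt M π (fun x => if x = s then (1 : ℝ) else 0) t

/-- Expected discounted return `J(π, M) = E_{s ∼ μ₀}[V^π_M(s)]`. -/
noncomputable def Jval (M : MDP S A) (π : S → A → ℝ) (μ₀ : S → ℝ) : ℝ :=
  ∑ s, μ₀ s * Vval M π s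

/-- Normalized discounted occupancy measure
`ρ^π_M(s,a) = (1-γ) ∑_t γ^t P^π_{M,t}(s) π(a|s)`. -/
noncomputable def occupancy (M : MDP S A) (π : S → A → ℝ) (μ₀ : S → ℝ) (s : S) (a : A) : ℝ :=
  (1 - M.γ) * (∑' t : ℕ, M.γ ^ t * stateDist M π μ₀ t s) * π s a

/-- Total variation distance between finite distributions: `sup_E |p(E) - q(E)|`. -/
noncomputable def tvFin {X : Type*} [Fintype X] (p q : X → ℝ) : ℝ :=
  ⨆ E : Finset X, |∑ x ∈ E, p x - ∑ x ∈ E, q x|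

/-! ### Auxiliary definitions and lemmas for the telescoping lemma -/

/-- One-step pushforward of a state distribution under policy `π` and kernel of `M`. -/
noncomputable def push (M : MDP S A) (π : S → A → ℝ) (μ : S → ℝ) : S → ℝ :=
  fun s' => ∑ s, ∑ a, μ s * π s a * M.T s a s'

lemma stateDist_succ (M : MDP S A) (π : S → A → ℝ) (μ : S → ℝ) (t : ℕ) :
    stateDist M π μ (t + 1) = push M π (stateDist M π μ t) := rfl

lemma push_isDist {M : MDP S A} {π : S → A → ℝ} {μ : S → ℝ}
    (hπ : IsPolicy π) (hT : IsKernel M.T) (hμ : IsDist μ) : IsDist (push M π μ) := by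
  constructor
  · intro s'
    refine Finset.sum_nonneg fun s _ => Finset.sum_nonneg fun a _ => ?_
    exact mul_nonneg (mul_nonneg (hμ.1 s) (hπ.1 s a)) (hT.1 s a s')
  · have h : ∑ s', push M π μ s' = ∑ s, ∑ a, μ s * π s a * (∑ s', M.T s a s') := by
      unfold push
      rw [Finset.sum_comm]
      refine Finset.sum_congr rfl fun s _ => ?_
      rw [Finset.sum_comm]
      refine Finset.sum_congr rfl fun a _ => ?_
      rw [Finset.mul_sum]
    rw [h]
    simp_rw [hT.2, mul_one, ← Finset.mul_sum, hπ.2, mul_one]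
    exact hμ.2

lemma stateDist_isDist {M : MDP S A} {π : S → A → ℝ} {μ : S → ℝ}
    (hπ : IsPolicy π) (hT : IsKernel M.T) (hμ : IsDist μ) (t : ℕ) :
    IsDist (stateDist M π μ t) := by
  induction t with
  | zero => exact hμ
  | succ t ih => rw [stateDist_succ]; exact push_isDist hπ hT ih

lemma expRewardAt_bound {M : MDP S A} {π : S → A → ℝ} {μ : S → ℝ}
    (hπ : IsPolicy π) (hT : IsKernel M.T) (hμ : IsDist μ) (t : ℕ) :
    |expRewardAt M π μ t| ≤ ∑ s, ∑ a, |M.r s a| := by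
  have hd := stateDist_isDist hπ hT hμ t
  unfold expRewardAt
  calc |∑ s, ∑ a, stateDist M π μ t s * π s a * M.r s a|
      ≤ ∑ s, |∑ a, stateDist M π μ t s * π s a * M.r s a| :=
        Finset.abs_sum_le_sum_abs _ _
    _ ≤ ∑ s, ∑ a, |stateDist M π μ t s * π s a * M.r s a| :=
        Finset.sum_le_sum fun s _ => Finset.abs_sum_le_sum_abs _ _
    _ ≤ ∑ s, ∑ a, |M.r s a| := by
        refine Finset.sum_le_sum fun s _ => Finset.sum_le_sum fun a _ => ?_
        rw [abs_mul, abs_mul]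
        have h1 : |stateDist M π μ t s| ≤ 1 := by
          rw [abs_of_nonneg (hd.1 s)]
          calc stateDist M π μ t s ≤ ∑ x, stateDist M π μ t x :=
                Finset.single_le_sum (fun x _ => hd.1 x) (Finset.mem_univ s)
            _ = 1 := hd.2
        have h2 : |π s a| ≤ 1 := by
          rw [abs_of_nonneg (hπ.1 s a)]
          calc π s a ≤ ∑ b, π s b :=
                Finset.single_le_sum (fun b _ => hπ.1 s b) (Finset.mem_univ a)
            _ = 1 := hπ.2 s
        calc |stateDist M π μ t s| * |π s a| * |M.r s a| ≤ 1 * 1 * |M.r s a| := by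
              gcongr <;> positivity
          _ = |M.r s a| := by ring

lemma summable_geo_bound {γ : ℝ} (h0 : 0 ≤ γ) (h1 : γ < 1) {f : ℕ → ℝ} {C : ℝ}
    (hf : ∀ t, |f t| ≤ C) : Summable (fun t => γ ^ t * f t) := by
  refine Summable.of_norm_bounded
    ((summable_geometric_of_lt_one h0 h1).mul_right C) (fun t => ?_)
  rw [Real.norm_eq_abs, abs_mul, abs_pow, abs_of_nonneg h0]
  exact mul_le_mul_of_nonneg_left (hf t) (pow_nonneg h0 t)

lemma summable_Wterm {M : MDP S A} {π : S → A → ℝ} {μ : S → ℝ}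
    (h0 : 0 ≤ M.γ) (h1 : M.γ < 1) (hπ : IsPolicy π) (hT : IsKernel M.T) (hμ : IsDist μ) :
    Summable (fun t => M.γ ^ t * expRewardAt M π μ t) :=
  summable_geo_bound h0 h1 (expRewardAt_bound hπ hT hμ)

/-- Value of a distribution. -/
noncomputable def Wv (M : MDP S A) (π : S → A → ℝ) (μ : S → ℝ) : ℝ :=
  ∑' t : ℕ, M.γ ^ t * expRewardAt M π μ t

lemma isDist_delta (s0 : S) : IsDist (fun x : S => if x = s0 then (1 : ℝ) else 0) := by
  constructor
  · intro s; by_cases h : s = s0 <;> simp [h]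
  · simp

lemma Wv_bound {M : MDP S A} {π : S → A → ℝ} {μ : S → ℝ}
    (h0 : 0 ≤ M.γ) (h1 : M.γ < 1) (hπ : IsPolicy π) (hT : IsKernel M.T) (hμ : IsDist μ) :
    |Wv M π μ| ≤ (∑ s, ∑ a, |M.r s a|) * (1 - M.γ)⁻¹ := by
  have hs := summable_Wterm h0 h1 hπ hT hμ
  have habs : Summable (fun t => ‖M.γ ^ t * expRewardAt M π μ t‖) := hs.abs
  calc |Wv M π μ| ≤ ∑' t : ℕ, ‖M.γ ^ t * expRewardAt M π μ t‖ :=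
        norm_tsum_le_tsum_norm habs
    _ ≤ ∑' t : ℕ, M.γ ^ t * (∑ s, ∑ a, |M.r s a|) := by
        refine Summable.tsum_le_tsum (fun t => ?_) habs
          ((summable_geometric_of_lt_one h0 h1).mul_right _)
        rw [Real.norm_eq_abs, abs_mul, abs_pow, abs_of_nonneg h0]
        exact mul_le_mul_of_nonneg_left (expRewardAt_bound hπ hT hμ t) (pow_nonneg h0 t)
    _ = (∑ s, ∑ a, |M.r s a|) * (1 - M.γ)⁻¹ := by
        rw [tsum_mul_right, tsum_geometric_of_lt_one h0 h1, mul_comm]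

lemma stateDist_linear (M : MDP S A) (π : S → A → ℝ) (μ : S → ℝ) (t : ℕ) (s : S) :
    stateDist M π μ t s
      = ∑ s0, μ s0 * stateDist M π (fun x => if x = s0 then (1 : ℝ) else 0) t s := by
  induction t generalizing s with
  | zero =>
      show μ s = ∑ s0, μ s0 * (if s = s0 then (1 : ℝ) else 0)
      simp [mul_ite, Finset.sum_ite_eq]
  | succ t ih =>
      calc stateDist M π μ (t + 1) s
          = ∑ x, ∑ a, stateDist M π μ t x * π x a * M.T x a s := rfl
        _ = ∑ x, ∑ a, ∑ s0, μ s0 *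
              (stateDist M π (fun y => if y = s0 then (1 : ℝ) else 0) t x * π x a * M.T x a s) := by
            refine Finset.sum_congr rfl fun x _ => Finset.sum_congr rfl fun a _ => ?_
            rw [ih, Finset.sum_mul, Finset.sum_mul]
            exact Finset.sum_congr rfl fun s0 _ => by ring
        _ = ∑ x, ∑ s0, ∑ a, μ s0 *
              (stateDist M π (fun y => if y = s0 then (1 : ℝ) else 0) t x * π x a * M.T x a s) :=
            Finset.sum_congr rfl fun x _ => Finset.sum_comm
        _ = ∑ s0, ∑ x, ∑ a, μ s0 *
              (stateDist M π (fun y => if y = s0 then (1 : ℝ) else 0) t x * π x a * M.T x a s) :=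
            Finset.sum_comm
        _ = ∑ s0, μ s0 * stateDist M π (fun y => if y = s0 then (1 : ℝ) else 0) (t + 1) s := by
            refine Finset.sum_congr rfl fun s0 _ => ?_
            show _ = μ s0 * ∑ x, ∑ a,
              stateDist M π (fun y => if y = s0 then (1 : ℝ) else 0) t x * π x a * M.T x a s
            rw [Finset.mul_sum]
            exact Finset.sum_congr rfl fun x _ => by rw [Finset.mul_sum]

lemma expRewardAt_linear (M : MDP S A) (π : S → A → ℝ) (μ : S → ℝ) (t : ℕ) :
    expRewardAt M π μ t
      = ∑ s0, μ s0 * expRewardAt M π (fun x => if x = s0 then (1 : ℝ) else 0) t := by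
  calc expRewardAt M π μ t
      = ∑ s, ∑ a, stateDist M π μ t s * π s a * M.r s a := rfl
    _ = ∑ s, ∑ a, ∑ s0, μ s0 *
          (stateDist M π (fun y => if y = s0 then (1 : ℝ) else 0) t s * π s a * M.r s a) := by
        refine Finset.sum_congr rfl fun s _ => Finset.sum_congr rfl fun a _ => ?_
        rw [stateDist_linear M π μ t s, Finset.sum_mul, Finset.sum_mul]
        exact Finset.sum_congr rfl fun s0 _ => by ring
    _ = ∑ s, ∑ s0, ∑ a, μ s0 *
          (stateDist M π (fun y => if y = s0 then (1 : ℝ) else 0) t s * π s a * M.r s a) :=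
        Finset.sum_congr rfl fun s _ => Finset.sum_comm
    _ = ∑ s0, ∑ s, ∑ a, μ s0 *
          (stateDist M π (fun y => if y = s0 then (1 : ℝ) else 0) t s * π s a * M.r s a) :=
        Finset.sum_comm
    _ = ∑ s0, μ s0 * expRewardAt M π (fun x => if x = s0 then (1 : ℝ) else 0) t := by
        refine Finset.sum_congr rfl fun s0 _ => ?_
        show _ = μ s0 * ∑ s, ∑ a,
          stateDist M π (fun y => if y = s0 then (1 : ℝ) else 0) t s * π s a * M.r s a
        rw [Finset.mul_sum]
        exact Finset.sum_congr rfl fun s _ => by rw [Finset.mul_sum]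

lemma Wv_eq_sum (M : MDP S A) (π : S → A → ℝ) (μ : S → ℝ)
    (h0 : 0 ≤ M.γ) (h1 : M.γ < 1) (hπ : IsPolicy π) (hT : IsKernel M.T) :
    Wv M π μ = ∑ s, μ s * Vval M π s := by
  unfold Wv Vval
  have key : ∀ t : ℕ, M.γ ^ t * expRewardAt M π μ t
      = ∑ s0, μ s0 * (M.γ ^ t * expRewardAt M π (fun x => if x = s0 then (1 : ℝ) else 0) t) := by
    intro t
    rw [expRewardAt_linear, Finset.mul_sum]
    exact Finset.sum_congr rfl fun s0 _ => by ring
  rw [tsum_congr key, Summable.tsum_finsetSum (fun s0 _ =>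
    ((summable_Wterm h0 h1 hπ hT (isDist_delta s0)).mul_left (μ s0)))]
  exact Finset.sum_congr rfl fun s0 _ => tsum_mul_left

lemma stateDist_shift (M : MDP S A) (π : S → A → ℝ) (μ : S → ℝ) (t : ℕ) :
    stateDist M π μ (t + 1) = stateDist M π (push M π μ) t := by
  induction t with
  | zero => rfl
  | succ t ih =>
      show push M π (stateDist M π μ (t + 1)) = push M π (stateDist M π (push M π μ) t)
      rw [ih]

lemma expRewardAt_shift (M : MDP S A) (π : S → A → ℝ) (μ : S → ℝ) (t : ℕ) :
    expRewardAt M π μ (t + 1) = expRewardAt M π (push M π μ) t := by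
  unfold expRewardAt
  rw [stateDist_shift]

lemma Wv_bellman (M : MDP S A) (π : S → A → ℝ) (μ : S → ℝ)
    (h0 : 0 ≤ M.γ) (h1 : M.γ < 1) (hπ : IsPolicy π) (hT : IsKernel M.T) (hμ : IsDist μ) :
    Wv M π μ = expRewardAt M π μ 0 + M.γ * Wv M π (push M π μ) := by
  have hs := summable_Wterm h0 h1 hπ hT hμ
  unfold Wv
  rw [Summable.tsum_eq_zero_add hs, pow_zero, one_mul]
  congr 1
  have key : ∀ t : ℕ, M.γ ^ (t + 1) * expRewardAt M π μ (t + 1)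
      = M.γ * (M.γ ^ t * expRewardAt M π (push M π μ) t) := by
    intro t
    rw [expRewardAt_shift, pow_succ]
    ring
  rw [tsum_congr key, tsum_mul_left]

lemma tsum_telescope_sub {a : ℕ → ℝ} (ha : Summable a) :
    ∑' t : ℕ, (a t - a (t + 1)) = a 0 := by
  have h1 : Summable (fun t => a (t + 1)) := (summable_nat_add_iff 1).mpr ha
  rw [Summable.tsum_sub ha h1]
  have h2 := Summable.tsum_eq_zero_add ha
  linarith [h2]

lemma Wv_push (M M' : MDP S A) (π : S → A → ℝ) (μ : S → ℝ)
    (h0 : 0 ≤ M.γ) (h1 : M.γ < 1) (hπ : IsPolicy π) (hT : IsKernel M.T) :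
    Wv M π (push M' π μ) = ∑ s, ∑ a, μ s * π s a * ∑ s', M'.T s a s' * Vval M π s' := by
  calc Wv M π (push M' π μ)
      = ∑ s', push M' π μ s' * Vval M π s' := Wv_eq_sum M π _ h0 h1 hπ hT
    _ = ∑ s', ∑ s, ∑ a, μ s * π s a * M'.T s a s' * Vval M π s' := by
        refine Finset.sum_congr rfl fun s' _ => ?_
        rw [show push M' π μ s' = ∑ s, ∑ a, μ s * π s a * M'.T s a s' from rfl,
          Finset.sum_mul]
        exact Finset.sum_congr rfl fun s _ => by rw [Finset.sum_mul]
    _ = ∑ s, ∑ s', ∑ a, μ s * π s a * M'.T s a s' * Vval M π s' := Finset.sum_comm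
    _ = ∑ s, ∑ a, ∑ s', μ s * π s a * M'.T s a s' * Vval M π s' :=
        Finset.sum_congr rfl fun s _ => Finset.sum_comm
    _ = ∑ s, ∑ a, μ s * π s a * ∑ s', M'.T s a s' * Vval M π s' := by
        refine Finset.sum_congr rfl fun s _ => Finset.sum_congr rfl fun a _ => ?_
        rw [Finset.mul_sum]
        exact Finset.sum_congr rfl fun s' _ => by ring

/-- Telescoping / simulation lemma: for MDPs `M` and `M̂` sharing the same reward,
discount `γ ∈ (0,1)` and initial distribution `μ₀`, and any policy `π`,
`J(π,M) - J(π,M̂) = (γ/(1-γ)) E_{(s,a) ∼ ρ^π_{M̂}}[E_{s' ∼ T(·|s,a)} V^π_M(s') -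
E_{s' ∼ T̂(·|s,a)} V^π_M(s')]`. -/
theorem telescoping (M Mhat : MDP S A) (π : S → A → ℝ) (μ₀ : S → ℝ)
    (hr : M.r = Mhat.r) (hγ : M.γ = Mhat.γ) (hγ0 : 0 < M.γ) (hγ1 : M.γ < 1)
    (hπ : IsPolicy π) (hT : IsKernel M.T) (hThat : IsKernel Mhat.T) (hμ : IsDist μ₀) :
    Jval M π μ₀ - Jval Mhat π μ₀ =
      (M.γ / (1 - M.γ)) *
        ∑ s, ∑ a, occupancy Mhat π μ₀ s a *
          ((∑ s', M.T s a s' * Vval M π s') - (∑ s', Mhat.T s a s' * Vval M π s')) := by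
  have hγ0' : 0 ≤ M.γ := hγ0.le
  have h1γ : (1 : ℝ) - M.γ ≠ 0 := by linarith
  have hγh0 : 0 ≤ Mhat.γ := hγ ▸ hγ0'
  have hγh1 : Mhat.γ < 1 := hγ ▸ hγ1
  have hν : ∀ t, IsDist (stateDist Mhat π μ₀ t) := fun t => stateDist_isDist hπ hThat hμ t
  -- summabilities
  have hsa : Summable (fun t => M.γ ^ t * Wv M π (stateDist Mhat π μ₀ t)) :=
    summable_geo_bound hγ0' hγ1 (fun t => Wv_bound hγ0' hγ1 hπ hT (hν t))
  have hΔbound : ∀ t, |Wv M π (push M π (stateDist Mhat π μ₀ t))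
      - Wv M π (push Mhat π (stateDist Mhat π μ₀ t))|
      ≤ (∑ s, ∑ a, |M.r s a|) * (1 - M.γ)⁻¹ + (∑ s, ∑ a, |M.r s a|) * (1 - M.γ)⁻¹ := by
    intro t
    refine (abs_sub _ _).trans (add_le_add ?_ ?_)
    · exact Wv_bound hγ0' hγ1 hπ hT (push_isDist hπ hT (hν t))
    · exact Wv_bound hγ0' hγ1 hπ hT (push_isDist hπ hThat (hν t))
  have hsΔ : Summable (fun t => M.γ ^ t * (Wv M π (push M π (stateDist Mhat π μ₀ t))
      - Wv M π (push Mhat π (stateDist Mhat π μ₀ t)))) :=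
    summable_geo_bound hγ0' hγ1 hΔbound
  -- key per-step identity
  have key : ∀ t, Mhat.γ ^ t * expRewardAt Mhat π μ₀ t
      = (M.γ ^ t * Wv M π (stateDist Mhat π μ₀ t)
          - M.γ ^ (t + 1) * Wv M π (stateDist Mhat π μ₀ (t + 1)))
        - M.γ * (M.γ ^ t * (Wv M π (push M π (stateDist Mhat π μ₀ t))
            - Wv M π (push Mhat π (stateDist Mhat π μ₀ t)))) := by
    intro t
    have hb := Wv_bellman M π (stateDist Mhat π μ₀ t) hγ0' hγ1 hπ hT (hν t)
    have he : expRewardAt M π (stateDist Mhat π μ₀ t) 0 = expRewardAt Mhat π μ₀ t := by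
      show (∑ s, ∑ a, stateDist Mhat π μ₀ t s * π s a * M.r s a)
        = ∑ s, ∑ a, stateDist Mhat π μ₀ t s * π s a * Mhat.r s a
      rw [hr]
    have hν1 : stateDist Mhat π μ₀ (t + 1) = push Mhat π (stateDist Mhat π μ₀ t) :=
      stateDist_succ Mhat π μ₀ t
    have hE : expRewardAt Mhat π μ₀ t
        = Wv M π (stateDist Mhat π μ₀ t)
          - M.γ * Wv M π (push M π (stateDist Mhat π μ₀ t)) := by
      rw [← he, hb]; ring
    rw [← hγ, hE, hν1, pow_succ]
    ring
  have hsub : Summable (fun t => M.γ ^ t * Wv M π (stateDist Mhat π μ₀ t)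
      - M.γ ^ (t + 1) * Wv M π (stateDist Mhat π μ₀ (t + 1))) :=
    hsa.sub ((summable_nat_add_iff 1).mpr hsa)
  -- value difference via telescoping
  have hWhat : Wv Mhat π μ₀
      = Wv M π μ₀ - M.γ * ∑' t, M.γ ^ t * (Wv M π (push M π (stateDist Mhat π μ₀ t))
          - Wv M π (push Mhat π (stateDist Mhat π μ₀ t))) := by
    calc Wv Mhat π μ₀ = ∑' t : ℕ, Mhat.γ ^ t * expRewardAt Mhat π μ₀ t := rfl
      _ = ∑' t : ℕ, ((M.γ ^ t * Wv M π (stateDist Mhat π μ₀ t)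
            - M.γ ^ (t + 1) * Wv M π (stateDist Mhat π μ₀ (t + 1)))
          - M.γ * (M.γ ^ t * (Wv M π (push M π (stateDist Mhat π μ₀ t))
              - Wv M π (push Mhat π (stateDist Mhat π μ₀ t))))) := tsum_congr key
      _ = (∑' t : ℕ, (M.γ ^ t * Wv M π (stateDist Mhat π μ₀ t)
            - M.γ ^ (t + 1) * Wv M π (stateDist Mhat π μ₀ (t + 1))))
          - ∑' t : ℕ, M.γ * (M.γ ^ t * (Wv M π (push M π (stateDist Mhat π μ₀ t))
              - Wv M π (push Mhat π (stateDist Mhat π μ₀ t)))) :=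
          Summable.tsum_sub hsub (hsΔ.mul_left M.γ)
      _ = Wv M π μ₀ - M.γ * ∑' t, M.γ ^ t * (Wv M π (push M π (stateDist Mhat π μ₀ t))
            - Wv M π (push Mhat π (stateDist Mhat π μ₀ t))) := by
          rw [tsum_telescope_sub hsa, tsum_mul_left, pow_zero, one_mul]
          rfl
  -- J difference
  have hJ1 : Jval M π μ₀ = Wv M π μ₀ := (Wv_eq_sum M π μ₀ hγ0' hγ1 hπ hT).symm
  have hJ2 : Jval Mhat π μ₀ = Wv Mhat π μ₀ := (Wv_eq_sum Mhat π μ₀ hγh0 hγh1 hπ hThat).symm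
  -- rewrite the inner tsum as a finite sum over (s, a)
  have hδsum : ∀ s : S, Summable (fun t => M.γ ^ t * stateDist Mhat π μ₀ t s) := by
    intro s
    refine summable_geo_bound (C := 1) hγ0' hγ1 (fun t => ?_)
    rw [abs_of_nonneg ((hν t).1 s)]
    calc stateDist Mhat π μ₀ t s ≤ ∑ x, stateDist Mhat π μ₀ t x :=
          Finset.single_le_sum (fun x _ => (hν t).1 x) (Finset.mem_univ s)
      _ = 1 := (hν t).2
  have hΔt : ∀ t, M.γ ^ t * (Wv M π (push M π (stateDist Mhat π μ₀ t))
      - Wv M π (push Mhat π (stateDist Mhat π μ₀ t)))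
      = ∑ s, ∑ a, (M.γ ^ t * stateDist Mhat π μ₀ t s)
          * (π s a * ((∑ s', M.T s a s' * Vval M π s')
              - (∑ s', Mhat.T s a s' * Vval M π s'))) := by
    intro t
    rw [Wv_push M M π (stateDist Mhat π μ₀ t) hγ0' hγ1 hπ hT,
      Wv_push M Mhat π (stateDist Mhat π μ₀ t) hγ0' hγ1 hπ hT,
      ← Finset.sum_sub_distrib, Finset.mul_sum]
    refine Finset.sum_congr rfl fun s _ => ?_
    rw [← Finset.sum_sub_distrib, Finset.mul_sum]
    exact Finset.sum_congr rfl fun a _ => by ring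
  have hfinal : (∑' t, M.γ ^ t * (Wv M π (push M π (stateDist Mhat π μ₀ t))
      - Wv M π (push Mhat π (stateDist Mhat π μ₀ t))))
      = ∑ s, ∑ a, (∑' t, M.γ ^ t * stateDist Mhat π μ₀ t s)
          * (π s a * ((∑ s', M.T s a s' * Vval M π s')
              - (∑ s', Mhat.T s a s' * Vval M π s'))) := by
    rw [tsum_congr hΔt,
      Summable.tsum_finsetSum (fun s _ => summable_sum (fun a _ => (hδsum s).mul_right _))]
    refine Finset.sum_congr rfl fun s _ => ?_
    rw [Summable.tsum_finsetSum (fun a _ => (hδsum s).mul_right _)]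
    exact Finset.sum_congr rfl fun a _ => tsum_mul_right
  -- put everything together
  rw [hJ1, hJ2, hWhat]
  rw [hfinal]
  have hocc : ∀ (s : S) (a : A), occupancy Mhat π μ₀ s a
      = (1 - M.γ) * (∑' t, M.γ ^ t * stateDist Mhat π μ₀ t s) * π s a := by
    intro s a
    rw [occupancy, ← hγ]
  calc Wv M π μ₀ - (Wv M π μ₀ - M.γ * ∑ s, ∑ a,
        (∑' t, M.γ ^ t * stateDist Mhat π μ₀ t s)
          * (π s a * ((∑ s', M.T s a s' * Vval M π s')
              - (∑ s', Mhat.T s a s' * Vval M π s'))))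
      = M.γ * ∑ s, ∑ a, (∑' t, M.γ ^ t * stateDist Mhat π μ₀ t s)
          * (π s a * ((∑ s', M.T s a s' * Vval M π s')
              - (∑ s', Mhat.T s a s' * Vval M π s'))) := by ring
    _ = ∑ s, ∑ a, M.γ * ((∑' t, M.γ ^ t * stateDist Mhat π μ₀ t s)
          * (π s a * ((∑ s', M.T s a s' * Vval M π s')
              - (∑ s', Mhat.T s a s' * Vval M π s')))) := by
        rw [Finset.mul_sum]
        exact Finset.sum_congr rfl fun s _ => by rw [Finset.mul_sum]
    _ = ∑ s, ∑ a, M.γ / (1 - M.γ) * (occupancy Mhat π μ₀ s a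
          * ((∑ s', M.T s a s' * Vval M π s') - (∑ s', Mhat.T s a s' * Vval M π s'))) := by
        refine Finset.sum_congr rfl fun s _ => Finset.sum_congr rfl fun a _ => ?_
        rw [hocc s a]
        field_simp
    _ = M.γ / (1 - M.γ) * ∑ s, ∑ a, occupancy Mhat π μ₀ s a
          * ((∑ s', M.T s a s' * Vval M π s') - (∑ s', Mhat.T s a s' * Vval M π s')) := by
        rw [Finset.mul_sum]
        exact Finset.sum_congr rfl fun s _ => by rw [Finset.mul_sum]
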